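/- Assume ψ is convex with Crit_ψ ≠ ∅, and let u be a global solution of the first-order gradient system (DS-1). Then lim_{t→∞} ‖u′(t)‖ = 0; there exists x̂⋆ ∈ Crit_ψ such that u(t) converges weakly to x̂⋆ as t → ∞ (i.e. ⟨u(t), y⟩ → ⟨x̂⋆, y⟩ for every y ∈ H); and ∫₀^∞ (ψ(u(s)) − min_H ψ) ds ≤ ½·dist(u(0), Crit_ψ)², where dist(x, Crit_ψ) = inf_{y ∈ Crit_ψ} ‖x − y‖. -/

import Mathlib

open Filter MeasureTheory Set Topology


section Aux

variable {H : Type*} [NormedAddCommGroup H] [InnerProductSpace ℝ H] [CompleteSpace H]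

local notation "⟪" x ", " y "⟫" => @inner ℝ _ _ x y

lemma aux_fderiv_apply (ψ : H → ℝ) (z v : H) : (fderiv ℝ ψ z) v = ⟪gradient ψ z, v⟫ := by
  rw [gradient, InnerProductSpace.toDual_symm_apply]

lemma aux_grad_ineq (ψ : H → ℝ) (hd : Differentiable ℝ ψ) (hconv : ConvexOn ℝ univ ψ)
    (x y : H) : ψ x + ⟪gradient ψ x, y - x⟫ ≤ ψ y := by
  have hconv' : ConvexOn ℝ univ (fun s : ℝ => ψ (x + s • (y - x))) := by
    refine ⟨convex_univ, fun a _ b _ s t hs ht hst => ?_⟩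
    have hpt : x + (s * a + t * b) • (y - x)
        = s • (x + a • (y - x)) + t • (x + b • (y - x)) := by
      simp only [smul_add, smul_smul]
      rw [add_add_add_comm, ← add_smul, ← add_smul, hst, one_smul]
    simp only [smul_eq_mul, hpt]
    exact hconv.2 (mem_univ _) (mem_univ _) hs ht hst
  have hline : HasDerivAt (fun s : ℝ => x + s • (y - x)) (y - x) 0 := by
    simpa using ((hasDerivAt_id (0:ℝ)).smul_const (y - x)).const_add x
  have hder : HasDerivAt (fun s : ℝ => ψ (x + s • (y - x))) ((fderiv ℝ ψ x) (y - x)) 0 := by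
    have h2 : HasFDerivAt ψ (fderiv ℝ ψ x) (x + (0:ℝ) • (y - x)) := by
      simpa using (hd x).hasFDerivAt
    exact h2.comp_hasDerivAt 0 hline
  have hs := hconv'.le_slope_of_hasDerivAt (mem_univ (0:ℝ)) (mem_univ 1) one_pos hder
  rw [slope_def_field] at hs
  simp only [one_smul, zero_smul, add_zero, sub_zero, div_one] at hs
  rw [aux_fderiv_apply] at hs
  have : x + (y - x) = y := by abel
  rw [this] at hs
  linarith

lemma aux_mono (ψ : H → ℝ) (hd : Differentiable ℝ ψ) (hconv : ConvexOn ℝ univ ψ)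
    (x y : H) : 0 ≤ ⟪gradient ψ y - gradient ψ x, y - x⟫ := by
  have h1 := aux_grad_ineq ψ hd hconv x y
  have h2 := aux_grad_ineq ψ hd hconv y x
  have e1 : ⟪gradient ψ y, x - y⟫ = -⟪gradient ψ y, y - x⟫ := by
    rw [← inner_neg_right, neg_sub]
  rw [inner_sub_left]
  rw [e1] at h2
  linarith

lemma aux_antitoneOn_Icc {f : ℝ → ℝ} {f' : ℝ → ℝ} {a b : ℝ}
    (hc : ContinuousOn f (Icc a b)) (hd : ∀ t ∈ Ioo a b, HasDerivAt f (f' t) t)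
    (h0 : ∀ t ∈ Ioo a b, f' t ≤ 0) : AntitoneOn f (Icc a b) := by
  refine antitoneOn_of_deriv_nonpos (convex_Icc a b) hc ?_ ?_
  · rw [interior_Icc]
    exact fun t ht => ((hd t ht).differentiableAt).differentiableWithinAt
  · rw [interior_Icc]
    intro t ht
    rw [(hd t ht).deriv]
    exact h0 t ht

lemma aux_antitoneOn_Ici {f : ℝ → ℝ} {f' : ℝ → ℝ}
    (hc : ContinuousOn f (Ici 0)) (hd : ∀ t ∈ Ioi (0:ℝ), HasDerivAt f (f' t) t)
    (h0 : ∀ t ∈ Ioi (0:ℝ), f' t ≤ 0) : AntitoneOn f (Ici 0) := by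
  refine antitoneOn_of_deriv_nonpos (convex_Ici 0) hc ?_ ?_
  · rw [interior_Ici]
    exact fun t ht => ((hd t ht).differentiableAt).differentiableWithinAt
  · rw [interior_Ici]
    intro t ht
    rw [(hd t ht).deriv]
    exact h0 t ht

lemma aux_tendsto_zero {f : ℝ → ℝ} {B : ℝ}
    (hnn : ∀ t ∈ Ici (0:ℝ), 0 ≤ f t) (hb : ∀ t ∈ Ioi (0:ℝ), t * f t ≤ B) :
    Tendsto f atTop (𝓝 0) := by
  have hBt : Tendsto (fun t : ℝ => B / t) atTop (𝓝 0) :=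
    Tendsto.div_atTop tendsto_const_nhds tendsto_id
  refine tendsto_of_tendsto_of_tendsto_of_le_of_le' tendsto_const_nhds hBt ?_ ?_
  · exact (eventually_ge_atTop 0).mono fun t ht => hnn t ht
  · refine (eventually_gt_atTop 0).mono fun t ht => ?_
    rw [le_div_iff₀ ht]
    have := hb t ht
    linarith

lemma aux_norm_sq_deriv {w : ℝ → H} {w' : H} {t : ℝ} (h : HasDerivAt w w' t) :
    HasDerivAt (fun s => ‖w s‖^2) (2 * ⟪w', w t⟫) t := by
  have h2 := HasDerivAt.inner ℝ h h
  simp only [real_inner_self_eq_norm_sq] at h2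
  refine h2.congr_deriv ?_
  rw [real_inner_comm]
  ring

end Aux


section WSC

variable {H : Type*} [NormedAddCommGroup H] [InnerProductSpace ℝ H] [CompleteSpace H]

local notation "⟪" x ", " y "⟫" => @inner ℝ _ _ x y

lemma aux_wsc (x : ℕ → H) (C : ℝ) (hC : ∀ n, ‖x n‖ ≤ C) :
    ∃ (p : H) (φ : ℕ → ℕ), StrictMono φ ∧
      ∀ y : H, Tendsto (fun n => ⟪x (φ n), y⟫) atTop (𝓝 ⟪p, y⟫) := by
  classical
  have hCnn : 0 ≤ C := le_trans (norm_nonneg (x 0)) (hC 0)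
  set K : Submodule ℝ H := (Submodule.span ℝ (range x)).topologicalClosure with hK
  have hKclosed : IsClosed (K : Set H) := Submodule.isClosed_topologicalClosure _
  haveI : CompleteSpace K := hKclosed.completeSpace_coe
  have hxK : ∀ n, x n ∈ K :=
    fun n => Submodule.le_topologicalClosure _ (Submodule.subset_span (mem_range_self n))
  have hsep : TopologicalSpace.IsSeparable (K : Set H) := by
    have h1 := ((countable_range x).isSeparable.span (R := ℝ)).closure
    rw [hK, Submodule.topologicalClosure_coe]
    exact h1
  obtain ⟨c, hc_count, hc_sub⟩ := hsep
  obtain ⟨e, he⟩ : ∃ e : ℕ → H, insert (0:H) c = range e :=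
    (hc_count.insert 0).exists_eq_range (insert_nonempty _ _)
  have hKe : (K : Set H) ⊆ closure (range e) := by
    rw [← he]
    exact hc_sub.trans (closure_mono (subset_insert _ _))
  -- diagonal extraction via compactness of a countable product
  set F : ℕ → (ℕ → ℝ) := fun n i => ⟪x n, e i⟫ with hF
  have hFs : ∀ n, F n ∈ univ.pi (fun i => Icc (-(C * ‖e i‖)) (C * ‖e i‖)) := by
    intro n
    rw [mem_univ_pi]
    intro i
    have h1 : |(⟪x n, e i⟫ : ℝ)| ≤ C * ‖e i‖ :=
      le_trans (abs_real_inner_le_norm _ _)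
        (mul_le_mul_of_nonneg_right (hC n) (norm_nonneg _))
    exact abs_le.mp h1
  have hcomp : IsCompact (univ.pi fun i : ℕ => Icc (-(C * ‖e i‖)) (C * ‖e i‖)) :=
    isCompact_univ_pi fun i => isCompact_Icc
  obtain ⟨a, -, φ, hφ, hconv⟩ := hcomp.tendsto_subseq hFs
  have hcoord : ∀ i, Tendsto (fun n => (⟪x (φ n), e i⟫ : ℝ)) atTop (𝓝 (a i)) :=
    fun i => (tendsto_pi_nhds.mp hconv) i
  -- Cauchy for all y ∈ K
  have hcauchyK : ∀ y : H, y ∈ K → CauchySeq (fun n => (⟪x (φ n), y⟫ : ℝ)) := by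
    intro y hy
    rw [Metric.cauchySeq_iff]
    intro ε hε
    obtain ⟨w, hw_mem, hw_close⟩ : ∃ w ∈ range e, dist y w < ε / (3 * (C + 1)) := by
      have h1 : y ∈ closure (range e) := hKe hy
      rw [Metric.mem_closure_iff] at h1
      exact h1 _ (by positivity)
    obtain ⟨i, rfl⟩ := hw_mem
    have hcs : CauchySeq (fun n => (⟪x (φ n), e i⟫ : ℝ)) := (hcoord i).cauchySeq
    rw [Metric.cauchySeq_iff] at hcs
    obtain ⟨N, hN⟩ := hcs (ε / 3) (by positivity)
    refine ⟨N, fun m hm n hn => ?_⟩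
    have key : ∀ k, |(⟪x (φ k), y⟫ : ℝ) - ⟪x (φ k), e i⟫| ≤ C * (ε / (3 * (C + 1))) := by
      intro k
      rw [← inner_sub_right]
      refine le_trans (abs_real_inner_le_norm _ _) ?_
      refine mul_le_mul (hC _) ?_ (norm_nonneg _) hCnn
      rw [← dist_eq_norm]
      exact le_of_lt hw_close
    have hCb : C * (ε / (3 * (C + 1))) < ε / 3 := by
      have hd : 0 < ε / (3 * (C + 1)) := by positivity
      have h2 : (C + 1) * (ε / (3 * (C + 1))) = ε / 3 := by
        field_simp
      nlinarith
    have h3 := hN m hm n hn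
    rw [Real.dist_eq] at h3 ⊢
    have h4 := key m
    have h5 := key n
    have tri : |(⟪x (φ m), y⟫ : ℝ) - ⟪x (φ n), y⟫|
        ≤ |(⟪x (φ m), y⟫ : ℝ) - ⟪x (φ m), e i⟫| + |(⟪x (φ m), e i⟫ : ℝ) - ⟪x (φ n), e i⟫|
          + |(⟪x (φ n), e i⟫ : ℝ) - ⟪x (φ n), y⟫| := by
      have := abs_sub_le ((⟪x (φ m), y⟫ : ℝ)) (⟪x (φ m), e i⟫ : ℝ) (⟪x (φ n), y⟫ : ℝ)
      have := abs_sub_le ((⟪x (φ m), e i⟫ : ℝ)) (⟪x (φ n), e i⟫ : ℝ) (⟪x (φ n), y⟫ : ℝ)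
      linarith [abs_sub_le ((⟪x (φ m), y⟫ : ℝ)) (⟪x (φ m), e i⟫ : ℝ) (⟪x (φ n), y⟫ : ℝ),
        abs_sub_le ((⟪x (φ m), e i⟫ : ℝ)) (⟪x (φ n), e i⟫ : ℝ) (⟪x (φ n), y⟫ : ℝ)]
    have h6 : |(⟪x (φ n), e i⟫ : ℝ) - ⟪x (φ n), y⟫| = |(⟪x (φ n), y⟫ : ℝ) - ⟪x (φ n), e i⟫| :=
      abs_sub_comm _ _
    rw [h6] at tri
    linarith
  -- reduce arbitrary y to its projection onto K
  have hproj : ∀ (n : ℕ) (y : H), (⟪x n, y⟫ : ℝ) = ⟪x n, ((K.orthogonalProjectionOnto y : K) : H)⟫ := by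
    intro n y
    have h0 : (⟪y - ((K.orthogonalProjectionOnto y : K) : H), x n⟫ : ℝ) = 0 :=
      Submodule.starProjection_inner_eq_zero (K := K) y (x n) (hxK n)
    rw [← sub_eq_zero, ← inner_sub_right, real_inner_comm]
    exact h0
  have hcauchy : ∀ y : H, CauchySeq (fun n => (⟪x (φ n), y⟫ : ℝ)) := by
    intro y
    have h1 := hcauchyK _ (Submodule.coe_mem (K.orthogonalProjectionOnto y))
    have heq : (fun n => (⟪x (φ n), ((K.orthogonalProjectionOnto y : K) : H)⟫ : ℝ))
        = fun n => (⟪x (φ n), y⟫ : ℝ) := funext fun n => (hproj (φ n) y).symm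
    rwa [heq] at h1
  set g : H → ℝ := fun y => limUnder atTop (fun n => (⟪x (φ n), y⟫ : ℝ)) with hg
  have hgl : ∀ y : H, Tendsto (fun n => (⟪x (φ n), y⟫ : ℝ)) atTop (𝓝 (g y)) :=
    fun y => (hcauchy y).tendsto_limUnder
  have hadd : ∀ y z : H, g (y + z) = g y + g z := by
    intro y z
    refine tendsto_nhds_unique (hgl (y + z)) ?_
    have h1 := (hgl y).add (hgl z)
    simpa only [← inner_add_right] using h1
  have hsmul : ∀ (c : ℝ) (y : H), g (c • y) = c * g y := by
    intro c y
    refine tendsto_nhds_unique (hgl (c • y)) ?_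
    have h1 := (hgl y).const_mul c
    simpa only [← real_inner_smul_right] using h1
  have hbound : ∀ y : H, |g y| ≤ C * ‖y‖ := by
    intro y
    refine le_of_tendsto (hgl y).abs (Eventually.of_forall fun n => ?_)
    exact le_trans (abs_real_inner_le_norm _ _)
      (mul_le_mul_of_nonneg_right (hC _) (norm_nonneg _))
  let gl : H →ₗ[ℝ] ℝ :=
    { toFun := g
      map_add' := hadd
      map_smul' := hsmul }
  let gc : H →L[ℝ] ℝ := LinearMap.mkContinuous gl C
    (fun y => by rw [Real.norm_eq_abs]; exact hbound y)
  refine ⟨(InnerProductSpace.toDual ℝ H).symm gc, φ, hφ, fun y => ?_⟩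
  have h2 : (⟪(InnerProductSpace.toDual ℝ H).symm gc, y⟫ : ℝ) = gc y :=
    InnerProductSpace.toDual_symm_apply
  rw [h2]
  exact hgl y

end WSC
set_option maxHeartbeats 1000000 in
/-- Proposition 4 (i): if `ψ` is convex with `Crit ψ ≠ ∅` and `u` is a global solution of
`u' = -∇ψ(u)`, then `‖u'(t)‖ → 0`, `u(t)` converges weakly to some `x̂⋆ ∈ Crit ψ`, and
`∫₀^∞ (ψ(u s) - min ψ) ds ≤ ½ dist(u 0, Crit ψ)²`. -/
theorem stmt_11 {H : Type*} [NormedAddCommGroup H] [InnerProductSpace ℝ H] [CompleteSpace H]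
    (ψ : H → ℝ) (hψ : ContDiff ℝ 2 ψ) (hconv : ConvexOn ℝ univ ψ)
    (hcrit : {x : H | gradient ψ x = 0}.Nonempty)
    (u u' : ℝ → H)
    (hu : ∀ t ∈ Ici (0:ℝ), HasDerivWithinAt u (u' t) (Ici 0) t)
    (hode : ∀ t ∈ Ici (0:ℝ), u' t = -(gradient ψ (u t))) :
    Tendsto (fun t => ‖u' t‖) atTop (nhds 0) ∧
      (∃ xstar : H, gradient ψ xstar = 0 ∧
        ∀ y : H, Tendsto (fun t => (inner ℝ (u t) y : ℝ)) atTop (nhds (inner ℝ xstar y))) ∧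
      ∫⁻ s in Ioi (0:ℝ), ENNReal.ofReal (ψ (u s) - ⨅ z : H, ψ z) ≤
        ENNReal.ofReal ((1/2) * Metric.infDist (u 0) {x : H | gradient ψ x = 0} ^ 2) := by
  classical
  obtain ⟨z₀, hz₀⟩ := hcrit
  have hz₀S : gradient ψ z₀ = 0 := hz₀
  have hdψ : Differentiable ℝ ψ := hψ.differentiable (by norm_num)
  have hψc : Continuous ψ := hdψ.continuous
  have hSmin : ∀ z : H, gradient ψ z = 0 → ∀ x : H, ψ z ≤ ψ x := by
    intro z hz x
    have h1 := aux_grad_ineq ψ hdψ hconv z x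
    rw [hz] at h1
    simpa using h1
  -- gradient regularity
  have hGc : Continuous (gradient ψ) := by
    have h1 : Continuous (fderiv ℝ ψ) := hψ.continuous_fderiv (by norm_num)
    exact ((InnerProductSpace.toDual ℝ H).symm.continuous).comp h1
  have hGcd : ContDiff ℝ 1 (gradient ψ) := by
    have h2 : ContDiff ℝ 1 (fderiv ℝ ψ) := hψ.fderiv_right (by norm_num)
    exact ((InnerProductSpace.toDual ℝ H).symm.contDiff).comp h2
  have hGdiff : Differentiable ℝ (gradient ψ) := hGcd.differentiable (by norm_num)
  set A : H → H →L[ℝ] H := fun z => fderiv ℝ (gradient ψ) z with hA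
  have hAder : ∀ z, HasFDerivAt (gradient ψ) (A z) z := fun z => (hGdiff z).hasFDerivAt
  -- positivity of the second-derivative form
  have hpsd : ∀ z v : H, 0 ≤ (inner ℝ (A z v) v : ℝ) := by
    intro z v
    have hline : HasDerivAt (fun s : ℝ => z + s • v) v 0 := by
      simpa using ((hasDerivAt_id (0:ℝ)).smul_const v).const_add z
    have hGz : HasDerivAt (fun s : ℝ => gradient ψ (z + s • v)) (A z v) 0 := by
      have h2 : HasFDerivAt (gradient ψ) (A z) (z + (0:ℝ) • v) := by simpa using hAder z
      exact h2.comp_hasDerivAt 0 hline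
    have hφd : HasDerivAt (fun s : ℝ => (inner ℝ (gradient ψ (z + s • v)) v : ℝ))
        (inner ℝ (A z v) v : ℝ) 0 := by
      have h3 := HasDerivAt.inner ℝ hGz (hasDerivAt_const (0:ℝ) v)
      simpa using h3
    rw [hasDerivAt_iff_tendsto_slope] at hφd
    have hsub : Ioi (0:ℝ) ⊆ {(0:ℝ)}ᶜ := fun s hs => ne_of_gt hs
    have hφd' := hφd.mono_left (nhdsWithin_mono 0 hsub)
    refine ge_of_tendsto hφd' ?_
    filter_upwards [self_mem_nhdsWithin] with s hs
    have hs0 : (0:ℝ) < s := hs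
    have hmono := aux_mono ψ hdψ hconv z (z + s • v)
    have he : z + s • v - z = s • v := by abel
    rw [he, real_inner_smul_right, inner_sub_left] at hmono
    rw [slope_def_field]
    apply div_nonneg
    · simp only [zero_smul, add_zero]
      nlinarith
    · simp [le_of_lt hs0]
  -- basic facts about u
  have hucont : ContinuousOn u (Ici 0) := fun t ht => (hu t ht).continuousWithinAt
  have huderiv : ∀ t : ℝ, 0 < t → HasDerivAt u (u' t) t := fun t ht =>
    (hu t (le_of_lt ht)).hasDerivAt (Ici_mem_nhds ht)
  have huat : ∀ t : ℝ, 0 < t → ContinuousAt u t := fun t ht => (huderiv t ht).continuousAt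
  -- derivative of ψ ∘ u
  have hEderiv : ∀ t : ℝ, 0 < t →
      HasDerivAt (fun t => ψ (u t)) (-‖gradient ψ (u t)‖^2) t := by
    intro t ht
    have h1 := ((hdψ (u t)).hasFDerivAt).comp_hasDerivAt t (huderiv t ht)
    have h2 : (fderiv ℝ ψ (u t)) (u' t) = -‖gradient ψ (u t)‖^2 := by
      rw [aux_fderiv_apply, hode t (le_of_lt ht), inner_neg_right, real_inner_self_eq_norm_sq]
    rw [h2] at h1
    exact h1
  -- derivative of ‖∇ψ(u ⬝)‖²
  have hgderiv : ∀ t : ℝ, 0 < t →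
      HasDerivAt (fun t => ‖gradient ψ (u t)‖^2)
        (2 * (inner ℝ (A (u t) (u' t)) (gradient ψ (u t)) : ℝ)) t := by
    intro t ht
    exact aux_norm_sq_deriv ((hAder (u t)).comp_hasDerivAt t (huderiv t ht))
  have hgcont : ContinuousOn (fun t => ‖gradient ψ (u t)‖^2) (Ici 0) :=
    (((hGc.comp_continuousOn hucont).norm).pow 2)
  have hganti : AntitoneOn (fun t => ‖gradient ψ (u t)‖^2) (Ici 0) := by
    refine aux_antitoneOn_Ici hgcont (fun t ht => hgderiv t ht) ?_
    intro t ht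
    have h1 : u' t = -(gradient ψ (u t)) := hode t (mem_Ici.mpr (le_of_lt ht))
    have h2 := hpsd (u t) (gradient ψ (u t))
    rw [h1, map_neg, inner_neg_left]
    linarith
  -- inner ℝ product estimate for the Lyapunov function
  have hinner_ge : ∀ (z : H) (t : ℝ), 0 ≤ t →
      (inner ℝ (u' t) (u t - z) : ℝ) ≤ -(ψ (u t) - ψ z) := by
    intro z t ht
    have h1 := aux_grad_ineq ψ hdψ hconv (u t) z
    have h2 : (inner ℝ (u' t) (u t - z) : ℝ) = inner ℝ (gradient ψ (u t)) (z - u t) := by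
      rw [hode t ht, inner_neg_left, ← inner_neg_right, neg_sub]
    rw [h2]
    linarith
  have hqderiv : ∀ (z : H) (t : ℝ), 0 < t →
      HasDerivAt (fun t => ‖u t - z‖^2) (2 * (inner ℝ (u' t) (u t - z) : ℝ)) t := by
    intro z t ht
    exact aux_norm_sq_deriv ((huderiv t ht).sub_const z)
  have hqcont : ∀ z : H, ContinuousOn (fun t => ‖u t - z‖^2) (Ici 0) := fun z =>
    (((hucont.sub continuousOn_const).norm).pow 2)
  have hqanti : ∀ z : H, gradient ψ z = 0 → AntitoneOn (fun t => ‖u t - z‖^2) (Ici 0) := by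
    intro z hz
    refine aux_antitoneOn_Ici (hqcont z) (fun t ht => hqderiv z t ht) ?_
    intro t ht
    have h1 := hinner_ge z t (le_of_lt ht)
    have h2 := hSmin z hz (u t)
    linarith
  -- FTC-type estimate
  have hFTC : ∀ (v w w' : ℝ → ℝ), ContinuousOn v (Ici 0) →
      (∀ t : ℝ, 0 < t → ContinuousAt v t) → ContinuousOn w (Ici 0) →
      (∀ t : ℝ, 0 < t → HasDerivAt w (w' t) t) → (∀ t : ℝ, 0 < t → w' t + v t ≤ 0) →
      ∀ T : ℝ, 0 ≤ T → ∫ s in (0:ℝ)..T, v s ≤ w 0 - w T := by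
    intro v w w' hvcont hvat hwcont hwd hle T hT
    rcases eq_or_lt_of_le hT with rfl | hT0
    · simp
    · have hvint : ∀ b : ℝ, 0 ≤ b → IntervalIntegrable v volume 0 b := by
        intro b hb
        apply ContinuousOn.intervalIntegrable
        apply hvcont.mono
        rw [uIcc_of_le hb]
        exact Icc_subset_Ici_self
      set h : ℝ → ℝ := fun t => w t + ∫ s in (0:ℝ)..t, v s with hh
      have hhc : ContinuousOn h (Icc 0 T) := by
        refine (hwcont.mono Icc_subset_Ici_self).add ?_
        have h2 : IntegrableOn v (uIcc 0 T) volume := by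
          rw [uIcc_of_le hT]
          exact (hvcont.mono Icc_subset_Ici_self).integrableOn_Icc
        have h3 := intervalIntegral.continuousOn_primitive_interval h2
        rwa [uIcc_of_le hT] at h3
      have hhd : ∀ t ∈ Ioo (0:ℝ) T, HasDerivAt h (w' t + v t) t := by
        intro t ht
        have hsm : StronglyMeasurableAtFilter v (𝓝 t) volume := by
          refine ContinuousOn.stronglyMeasurableAtFilter isOpen_Ioi ?_ t ht.1
          exact fun s hs => (hvat s hs).continuousWithinAt
        have h4 := intervalIntegral.integral_hasDerivAt_right (hvint t (le_of_lt ht.1))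
          hsm (hvat t ht.1)
        exact (hwd t ht.1).add h4
      have hanti := aux_antitoneOn_Icc hhc hhd
        (fun t ht => hle t ht.1)
      have h5 := hanti (left_mem_Icc.mpr hT) (right_mem_Icc.mpr hT) hT
      simp only [hh] at h5
      simp only [intervalIntegral.integral_same, add_zero] at h5
      linarith
  -- energy integral bound
  have hI2 : ∀ T : ℝ, 0 ≤ T →
      ∫ s in (0:ℝ)..T, ‖gradient ψ (u s)‖^2 ≤ ψ (u 0) - ψ (u T) := by
    intro T hT
    refine hFTC (fun s => ‖gradient ψ (u s)‖^2) (fun t => ψ (u t))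
      (fun t => -‖gradient ψ (u t)‖^2) hgcont ?_ (hψc.comp_continuousOn hucont)
      hEderiv (fun t _ => by
        show -‖gradient ψ (u t)‖^2 + ‖gradient ψ (u t)‖^2 ≤ 0
        linarith) T hT
    intro t ht
    exact (((hGc.continuousAt).comp (huat t ht)).norm).pow 2
  -- Lyapunov integral bound
  have hI1 : ∀ z : H, gradient ψ z = 0 → ∀ T : ℝ, 0 ≤ T →
      ∫ s in (0:ℝ)..T, (ψ (u s) - ψ z) ≤ (1/2) * ‖u 0 - z‖^2 := by
    intro z hz T hT
    have h1 := hFTC (fun s => ψ (u s) - ψ z) (fun t => (1/2) * ‖u t - z‖^2)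
      (fun t => (inner ℝ (u' t) (u t - z) : ℝ)) ?_ ?_ ?_ ?_ ?_ T hT
    · have h2 : (0:ℝ) ≤ (1/2) * ‖u T - z‖^2 := by positivity
      linarith
    · exact (hψc.comp_continuousOn hucont).sub continuousOn_const
    · intro t ht
      exact ((hψc.continuousAt).comp (huat t ht)).sub continuousAt_const
    · exact continuousOn_const.mul (hqcont z)
    · intro t ht
      have h3 := (hqderiv z t ht).const_mul (1/2)
      have h4 : (1/2 : ℝ) * (2 * (inner ℝ (u' t) (u t - z) : ℝ)) = inner ℝ (u' t) (u t - z) := by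
        ring
      rwa [h4] at h3
    · intro t ht
      have h5 := hinner_ge z t (le_of_lt ht)
      show (inner ℝ (u' t) (u t - z) : ℝ) + (ψ (u t) - ψ z) ≤ 0
      linarith
  -- lower bound for integrals of antitone nonneg functions
  have hlb : ∀ (f : ℝ → ℝ), AntitoneOn f (Ici 0) → ContinuousOn f (Ici 0) →
      ∀ T : ℝ, 0 ≤ T → T * f T ≤ ∫ s in (0:ℝ)..T, f s := by
    intro f hanti hcont T hT
    have hint : IntervalIntegrable f volume 0 T := by
      apply ContinuousOn.intervalIntegrable
      apply hcont.mono
      rw [uIcc_of_le hT]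
      exact Icc_subset_Ici_self
    have h1 : ∫ _ in (0:ℝ)..T, f T ≤ ∫ s in (0:ℝ)..T, f s :=
      intervalIntegral.integral_mono_on hT intervalIntegrable_const hint
        (fun s hs => hanti hs.1 hT hs.2)
    simpa using h1
  -- ‖∇ψ(u t)‖² → 0
  have hg0 : Tendsto (fun t => ‖gradient ψ (u t)‖^2) atTop (𝓝 0) := by
    apply aux_tendsto_zero (B := ψ (u 0) - ψ z₀)
    · intro t _; positivity
    · intro t ht
      have h1 := hlb _ hganti hgcont t (le_of_lt ht)
      have h2 := hI2 t (le_of_lt ht)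
      have h3 := hSmin z₀ hz₀S (u t)
      linarith
  have goal1 : Tendsto (fun t => ‖u' t‖) atTop (𝓝 0) := by
    have hsq : Tendsto (fun t => Real.sqrt (‖gradient ψ (u t)‖^2)) atTop (𝓝 0) :=
      (Real.continuous_sqrt.tendsto' 0 0 Real.sqrt_zero).comp hg0
    refine hsq.congr' ?_
    filter_upwards [eventually_ge_atTop (0:ℝ)] with t ht
    rw [Real.sqrt_sq (norm_nonneg _), hode t ht, norm_neg]
  -- ψ(u t) → ψ z₀
  have hEanti : AntitoneOn (fun t => ψ (u t)) (Ici 0) := by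
    refine aux_antitoneOn_Ici (hψc.comp_continuousOn hucont) hEderiv ?_
    intro t _
    exact neg_nonpos.mpr (by positivity)
  have hF0 : Tendsto (fun t => ψ (u t) - ψ z₀) atTop (𝓝 0) := by
    apply aux_tendsto_zero (B := (1/2) * ‖u 0 - z₀‖^2)
    · intro t _
      have := hSmin z₀ hz₀S (u t)
      linarith
    · intro t ht
      have hanti' : AntitoneOn (fun t => ψ (u t) - ψ z₀) (Ici 0) := by
        intro a ha b hb hab
        have := hEanti ha hb hab
        simp only
        linarith
      have h1 := hlb _ hanti' ((hψc.comp_continuousOn hucont).sub continuousOn_const)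
        t (le_of_lt ht)
      have h2 := hI1 z₀ hz₀S t (le_of_lt ht)
      linarith
  have hψlim : Tendsto (fun t => ψ (u t)) atTop (𝓝 (ψ z₀)) := by
    have h1 := hF0.add_const (ψ z₀)
    simpa using h1
  -- boundedness of the trajectory
  have hub : ∀ t : ℝ, 0 ≤ t → ‖u t‖ ≤ ‖u 0 - z₀‖ + ‖z₀‖ := by
    intro t ht
    have h1 : ‖u t - z₀‖^2 ≤ ‖u 0 - z₀‖^2 := hqanti z₀ hz₀S (self_mem_Ici) ht ht
    have h2 : ‖u t - z₀‖ ≤ ‖u 0 - z₀‖ := by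
      nlinarith [norm_nonneg (u t - z₀), norm_nonneg (u 0 - z₀)]
    calc ‖u t‖ = ‖(u t - z₀) + z₀‖ := by rw [sub_add_cancel]
      _ ≤ ‖u t - z₀‖ + ‖z₀‖ := norm_add_le _ _
      _ ≤ ‖u 0 - z₀‖ + ‖z₀‖ := by linarith
  -- convergence of ‖u t - z‖² for every critical z
  have hlim : ∀ z : H, gradient ψ z = 0 → ∃ L : ℝ,
      Tendsto (fun t => ‖u t - z‖^2) atTop (𝓝 L) := by
    intro z hz
    set f : ℝ → ℝ := fun t => ‖u (max t 0) - z‖^2 with hf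
    have hanti : Antitone f := by
      intro s t hst
      exact hqanti z hz (le_max_right s 0) (le_max_right t 0) (max_le_max hst le_rfl)
    have hbdd : BddBelow (range f) := ⟨0, by rintro r ⟨t, rfl⟩; positivity⟩
    refine ⟨⨅ t, f t, ?_⟩
    refine (tendsto_atTop_ciInf hanti hbdd).congr' ?_
    filter_upwards [eventually_ge_atTop (0:ℝ)] with t ht
    simp only [hf, max_eq_left ht]
  -- weak sequential cluster points along any time sequence diverging to ∞
  have hcluster : ∀ τ : ℕ → ℝ, Tendsto τ atTop atTop →
      ∃ (p : H) (θ : ℕ → ℕ), gradient ψ p = 0 ∧ StrictMono θ ∧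
        ∀ y : H, Tendsto (fun n => (inner ℝ (u (τ (θ n))) y : ℝ)) atTop (𝓝 (inner ℝ p y)) := by
    intro τ hτ
    set x : ℕ → H := fun n => u (max (τ n) 0) with hx
    have hxb : ∀ n, ‖x n‖ ≤ ‖u 0 - z₀‖ + ‖z₀‖ := fun n => hub _ (le_max_right _ _)
    obtain ⟨p, θ, hθ, hw⟩ := aux_wsc x _ hxb
    have hτθ : Tendsto (fun n => τ (θ n)) atTop atTop := hτ.comp hθ.tendsto_atTop
    have hev : ∀ᶠ n in atTop, max (τ (θ n)) 0 = τ (θ n) :=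
      (hτθ.eventually_ge_atTop 0).mono fun n hn => max_eq_left hn
    have hw' : ∀ y : H, Tendsto (fun n => (inner ℝ (u (τ (θ n))) y : ℝ)) atTop (𝓝 (inner ℝ p y)) := by
      intro y
      refine (hw y).congr' ?_
      filter_upwards [hev] with n hn
      simp only [hx, hn]
    have hmax : Tendsto (fun n => max (τ (θ n)) 0) atTop atTop :=
      tendsto_atTop_mono (fun n => le_max_left _ _) hτθ
    have hψx : Tendsto (fun n => ψ (x (θ n))) atTop (𝓝 (ψ z₀)) := by
      have h1 : Tendsto (fun n => max (τ (θ n)) 0) atTop atTop := hmax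
      exact hψlim.comp h1
    have hinx : Tendsto (fun n => (inner ℝ (gradient ψ p) (x (θ n) - p) : ℝ)) atTop (𝓝 0) := by
      have h1 := (hw (gradient ψ p)).sub_const (inner ℝ p (gradient ψ p) : ℝ)
      rw [sub_self] at h1
      refine h1.congr ?_
      intro n
      rw [inner_sub_right, real_inner_comm (x (θ n)) (gradient ψ p),
        real_inner_comm p (gradient ψ p)]
    have hψp : ψ p ≤ ψ z₀ := by
      have h2 : Tendsto (fun n => ψ (x (θ n)) - (inner ℝ (gradient ψ p) (x (θ n) - p) : ℝ))
          atTop (𝓝 (ψ z₀ - 0)) := hψx.sub hinx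
      rw [sub_zero] at h2
      refine ge_of_tendsto h2 (Eventually.of_forall fun n => ?_)
      have h3 := aux_grad_ineq ψ hdψ hconv p (x (θ n))
      linarith
    have hpmin : ∀ w : H, ψ p ≤ ψ w := fun w => le_trans hψp (hSmin z₀ hz₀S w)
    have hploc : IsLocalMin ψ p := Filter.Eventually.of_forall hpmin
    have hpcrit : gradient ψ p = 0 := by
      have h4 : fderiv ℝ ψ p = 0 := hploc.fderiv_eq_zero
      have h5 : gradient ψ p = (InnerProductSpace.toDual ℝ H).symm (fderiv ℝ ψ p) := rfl
      rw [h5, h4, map_zero]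
    exact ⟨p, θ, hpcrit, hθ, hw'⟩
  -- Opial's uniqueness argument
  have hkey : ∀ (p q : H) (τp τq : ℕ → ℝ), gradient ψ p = 0 → gradient ψ q = 0 →
      Tendsto τp atTop atTop → Tendsto τq atTop atTop →
      (∀ y : H, Tendsto (fun n => (inner ℝ (u (τp n)) y : ℝ)) atTop (𝓝 (inner ℝ p y))) →
      (∀ y : H, Tendsto (fun n => (inner ℝ (u (τq n)) y : ℝ)) atTop (𝓝 (inner ℝ q y))) →
      p = q := by
    intro p q τp τq hp hq hτp hτq hwp hwq
    obtain ⟨Lp, hLp⟩ := hlim p hp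
    obtain ⟨Lq, hLq⟩ := hlim q hq
    have hexp : ∀ t : ℝ, (inner ℝ (u t) (p - q) : ℝ)
        = ((‖u t - q‖^2 - ‖u t - p‖^2) + (‖p‖^2 - ‖q‖^2)) / 2 := by
      intro t
      have e1 := norm_sub_sq_real (u t) p
      have e2 := norm_sub_sq_real (u t) q
      rw [inner_sub_right]
      linarith
    have hr : Tendsto (fun t => (inner ℝ (u t) (p - q) : ℝ)) atTop
        (𝓝 (((Lq - Lp) + (‖p‖^2 - ‖q‖^2)) / 2)) := by
      have h1 := ((hLq.sub hLp).add_const (‖p‖^2 - ‖q‖^2)).div_const 2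
      refine h1.congr ?_
      intro t
      rw [hexp t]
    have h2 : Tendsto (fun n => (inner ℝ (u (τp n)) (p - q) : ℝ)) atTop
        (𝓝 (((Lq - Lp) + (‖p‖^2 - ‖q‖^2)) / 2)) := hr.comp hτp
    have h3 : Tendsto (fun n => (inner ℝ (u (τq n)) (p - q) : ℝ)) atTop
        (𝓝 (((Lq - Lp) + (‖p‖^2 - ‖q‖^2)) / 2)) := hr.comp hτq
    have h4 : (inner ℝ p (p - q) : ℝ) = ((Lq - Lp) + (‖p‖^2 - ‖q‖^2)) / 2 :=
      tendsto_nhds_unique (hwp (p - q)) h2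
    have h5 : (inner ℝ q (p - q) : ℝ) = ((Lq - Lp) + (‖p‖^2 - ‖q‖^2)) / 2 :=
      tendsto_nhds_unique (hwq (p - q)) h3
    have h6 : (inner ℝ (p - q) (p - q) : ℝ) = 0 := by
      rw [inner_sub_left, h4, h5]
      ring
    have h7 : p - q = 0 := inner_self_eq_zero.mp h6
    exact sub_eq_zero.mp h7
  -- weak convergence of u(t)
  obtain ⟨p, θ₀, hpcrit, hθ₀, hpw⟩ := hcluster (fun n : ℕ => (n:ℝ)) tendsto_natCast_atTop_atTop
  have hτp : Tendsto (fun n : ℕ => ((θ₀ n : ℕ) : ℝ)) atTop atTop :=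
    tendsto_natCast_atTop_atTop.comp hθ₀.tendsto_atTop
  have goal2 : ∀ y : H, Tendsto (fun t => (inner ℝ (u t) y : ℝ)) atTop (𝓝 (inner ℝ p y)) := by
    intro y
    rw [Filter.tendsto_iff_seq_tendsto]
    intro T hT
    apply Filter.tendsto_of_subseq_tendsto
    intro ns hns
    have hτ' : Tendsto (fun n => T (ns n)) atTop atTop := hT.comp hns
    obtain ⟨q, θ, hqcrit, hθ, hqw⟩ := hcluster (fun n => T (ns n)) hτ'
    have hqp : q = p := by
      refine hkey q p (fun n => T (ns (θ n))) (fun n : ℕ => ((θ₀ n : ℕ) : ℝ))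
        hqcrit hpcrit (hτ'.comp hθ.tendsto_atTop) hτp hqw hpw
    exact ⟨θ, by rw [← hqp]; exact hqw y⟩
  -- the integral bound
  have hinf : (⨅ z : H, ψ z) = ψ z₀ := by
    refine le_antisymm (ciInf_le ⟨ψ z₀, ?_⟩ z₀) (le_ciInf fun x => hSmin z₀ hz₀S x)
    rintro r ⟨x, rfl⟩
    exact hSmin z₀ hz₀S x
  have hFnn : ∀ s : ℝ, 0 ≤ ψ (u s) - ψ z₀ := fun s => by
    have := hSmin z₀ hz₀S (u s)
    linarith
  have hFcont : ContinuousOn (fun s => ψ (u s) - ψ z₀) (Ici 0) :=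
    (hψc.comp_continuousOn hucont).sub continuousOn_const
  have hIoi : Ioi (0:ℝ) = ⋃ n : ℕ, Ioc (n:ℝ) (n+1) := by
    ext t
    simp only [mem_Ioi, mem_iUnion, mem_Ioc]
    constructor
    · intro ht
      have hm1 : 1 ≤ ⌈t⌉₊ := Nat.one_le_ceil_iff.mpr ht
      refine ⟨⌈t⌉₊ - 1, ?_, ?_⟩
      · have h1 : ((⌈t⌉₊ : ℝ)) < t + 1 := Nat.ceil_lt_add_one (le_of_lt ht)
        have h2 : ((⌈t⌉₊ - 1 : ℕ) : ℝ) = (⌈t⌉₊ : ℝ) - 1 := by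
          push_cast [hm1]
          ring
        linarith
      · have h3 : ((⌈t⌉₊ - 1 : ℕ) : ℝ) + 1 = (⌈t⌉₊ : ℝ) := by
          push_cast [hm1]
          ring
        rw [h3]
        exact Nat.le_ceil t
    · rintro ⟨n, hn, -⟩
      exact lt_of_le_of_lt (Nat.cast_nonneg n) hn
  have hdisj : Pairwise (Function.onFun Disjoint fun n : ℕ => Ioc (n:ℝ) (n+1)) := by
    intro i j hij
    simp only [Function.onFun]
    rw [Set.Ioc_disjoint_Ioc]
    rcases hij.lt_or_gt with h | h
    · have h1 : (i:ℝ) + 1 ≤ (j:ℝ) := by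
        have := Nat.succ_le_of_lt h
        exact_mod_cast this
      calc min ((i:ℝ)+1) ((j:ℝ)+1) ≤ (i:ℝ)+1 := min_le_left _ _
        _ ≤ (j:ℝ) := h1
        _ ≤ max (i:ℝ) (j:ℝ) := le_max_right _ _
    · have h1 : (j:ℝ) + 1 ≤ (i:ℝ) := by
        have := Nat.succ_le_of_lt h
        exact_mod_cast this
      calc min ((i:ℝ)+1) ((j:ℝ)+1) ≤ (j:ℝ)+1 := min_le_right _ _
        _ ≤ (i:ℝ) := h1
        _ ≤ max (i:ℝ) (j:ℝ) := le_max_left _ _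
  have hpieceint : ∀ n : ℕ, IntegrableOn (fun s => ψ (u s) - ψ z₀) (Ioc (n:ℝ) (n+1)) volume := by
    intro n
    refine IntegrableOn.mono_set ?_ Ioc_subset_Icc_self
    refine (hFcont.mono ?_).integrableOn_Icc
    intro s hs
    exact le_trans (Nat.cast_nonneg n) hs.1
  have hpiece : ∀ n : ℕ, ∫⁻ s in Ioc (n:ℝ) (n+1), ENNReal.ofReal (ψ (u s) - ψ z₀)
      = ENNReal.ofReal (∫ s in Ioc (n:ℝ) (n+1), (ψ (u s) - ψ z₀)) := by
    intro n
    rw [MeasureTheory.ofReal_integral_eq_lintegral_ofReal (hpieceint n)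
      (Eventually.of_forall fun s => hFnn s)]
  have hbound_z : ∀ z : H, gradient ψ z = 0 →
      ∫⁻ s in Ioi (0:ℝ), ENNReal.ofReal (ψ (u s) - ψ z₀)
        ≤ ENNReal.ofReal ((1/2) * ‖u 0 - z‖^2) := by
    intro z hz
    rw [hIoi, lintegral_iUnion (fun n => measurableSet_Ioc) hdisj]
    apply ENNReal.tsum_le_of_sum_range_le
    intro n
    have hsum : ∀ i ∈ Finset.range n,
        ∫⁻ s in Ioc (i:ℝ) (i+1), ENNReal.ofReal (ψ (u s) - ψ z₀)
          = ENNReal.ofReal (∫ s in (i:ℝ)..(i+1:ℝ), (ψ (u s) - ψ z₀)) := by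
      intro i _
      rw [hpiece i, ← intervalIntegral.integral_of_le
        (by linarith [Nat.cast_nonneg (α := ℝ) i] : (i:ℝ) ≤ (i:ℝ)+1)]
    rw [Finset.sum_congr rfl hsum]
    have hnn : ∀ i ∈ Finset.range n, 0 ≤ ∫ s in (i:ℝ)..(i+1:ℝ), (ψ (u s) - ψ z₀) := by
      intro i _
      apply intervalIntegral.integral_nonneg (by linarith [Nat.cast_nonneg (α := ℝ) i])
      intro s _
      exact hFnn s
    rw [← ENNReal.ofReal_sum_of_nonneg hnn]
    apply ENNReal.ofReal_le_ofReal
    have hadj : ∀ k < n, IntervalIntegrable (fun s => ψ (u s) - ψ z₀) volume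
        ((fun k : ℕ => (k:ℝ)) k) ((fun k : ℕ => (k:ℝ)) (k+1)) := by
      intro k _
      apply ContinuousOn.intervalIntegrable
      apply hFcont.mono
      rw [uIcc_of_le (by push_cast; linarith [Nat.cast_nonneg (α := ℝ) k])]
      intro s hs
      exact le_trans (Nat.cast_nonneg k) hs.1
    have htel := intervalIntegral.sum_integral_adjacent_intervals (a := fun k : ℕ => (k:ℝ))
      (f := fun s => ψ (u s) - ψ z₀) (n := n) hadj
    simp only [Nat.cast_add, Nat.cast_one, Nat.cast_zero] at htel
    calc ∑ i ∈ Finset.range n, ∫ s in (i:ℝ)..(i+1:ℝ), (ψ (u s) - ψ z₀)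
        = ∫ s in (0:ℝ)..(n:ℝ), (ψ (u s) - ψ z₀) := htel
      _ ≤ (1/2) * ‖u 0 - z‖^2 := by
          have hψz : ψ z = ψ z₀ := le_antisymm (hSmin z hz z₀) (hSmin z₀ hz₀S z)
          have h9 := hI1 z hz (n:ℝ) (Nat.cast_nonneg n)
          rw [← hψz]
          exact h9
  have goal3 : ∫⁻ s in Ioi (0:ℝ), ENNReal.ofReal (ψ (u s) - ⨅ z : H, ψ z) ≤
      ENNReal.ofReal ((1/2) * Metric.infDist (u 0) {x : H | gradient ψ x = 0} ^ 2) := by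
    rw [hinf]
    set d := Metric.infDist (u 0) {x : H | gradient ψ x = 0} with hd
    have hd0 : 0 ≤ d := Metric.infDist_nonneg
    have hεbound : ∀ ε : ℝ, 0 < ε →
        ∫⁻ s in Ioi (0:ℝ), ENNReal.ofReal (ψ (u s) - ψ z₀)
          ≤ ENNReal.ofReal ((1/2) * (d + ε)^2) := by
      intro ε hε
      obtain ⟨z, hzS, hzd⟩ := (Metric.infDist_lt_iff ⟨z₀, hz₀⟩).mp
        (lt_add_of_pos_right d hε)
      refine le_trans (hbound_z z hzS) (ENNReal.ofReal_le_ofReal ?_)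
      have h1 : ‖u 0 - z‖ ≤ d + ε := by
        rw [← dist_eq_norm]
        exact le_of_lt hzd
      have h2 : ‖u 0 - z‖^2 ≤ (d + ε)^2 := by
        apply pow_le_pow_left₀ (norm_nonneg _) h1
      linarith
    have htt : Tendsto (fun ε : ℝ => ENNReal.ofReal ((1/2) * (d + ε)^2)) (𝓝[>] 0)
        (𝓝 (ENNReal.ofReal ((1/2) * d^2))) := by
      have hc : Tendsto (fun ε : ℝ => (1/2) * (d + ε)^2) (𝓝 0) (𝓝 ((1/2) * d^2)) := by
        have : Continuous (fun ε : ℝ => (1/2) * (d + ε)^2) := by continuity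
        have h3 := this.tendsto 0
        simpa using h3
      exact (ENNReal.continuous_ofReal.tendsto _).comp (hc.mono_left nhdsWithin_le_nhds)
    refine ge_of_tendsto htt ?_
    filter_upwards [self_mem_nhdsWithin] with ε hε
    exact hεbound ε hε
  exact ⟨goal1, ⟨p, hpcrit, goal2⟩, goal3⟩
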